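/- For every maximal clique C of routes of G(H) with respect to the canonical bipartite framing and every i ∈ S, there is exactly one j₀ ∈ N(i) such that C contains both a route of the form (1,(i,j₀),c) and a route of the form (2,(i,j₀),c') for some c, c' ∈ {1,2}. Dually, for every j ∈ T there is exactly one i₀ ∈ N(j) such that C contains both a route of the form (a,(i₀,j),1) and a route of the form (a',(i₀,j),2) for some a, a' ∈ {1,2}. -/

import Mathlib

open Finset Filter Pointwise

/-- Neighbors in the right shore `T` of a left vertex `i`. -/
def Nbr (E : Finset (ℕ × ℕ)) (i : ℕ) : Finset ℕ :=
  (E.filter (fun p => p.1 = i)).image Prod.snd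

/-- Neighbors in the left shore `S` of a right vertex `j`. -/
def Nbr' (E : Finset (ℕ × ℕ)) (j : ℕ) : Finset ℕ :=
  (E.filter (fun p => p.2 = j)).image Prod.fst

/-- A route of `G(H)`: a triple `(a, (i,j), c)` with `a, c ∈ {1,2}`, `(i,j) ∈ E`,
representing the path `α_{a,i} β_{i,j} γ_{j,c}`. -/
abbrev Route : Type := ℕ × (ℕ × ℕ) × ℕ

def IsRoute (E : Finset (ℕ × ℕ)) (r : Route) : Prop :=
  (r.1 = 1 ∨ r.1 = 2) ∧ r.2.1 ∈ E ∧ (r.2.2 = 1 ∨ r.2.2 = 2)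

/-- Two routes are in conflict with respect to the canonical bipartite framing. -/
def Conflict (r r' : Route) : Prop :=
  (r.2.1 = r'.2.1 ∧
    ((r.1 = 1 ∧ r.2.2 = 2 ∧ r'.1 = 2 ∧ r'.2.2 = 1) ∨
     (r.1 = 2 ∧ r.2.2 = 1 ∧ r'.1 = 1 ∧ r'.2.2 = 2))) ∨
  (r.2.1.1 = r'.2.1.1 ∧ r.2.1.2 ≠ r'.2.1.2 ∧
    ((r.2.1.2 < r'.2.1.2 ∧ r'.1 = 1 ∧ r.1 = 2) ∨
     (r'.2.1.2 < r.2.1.2 ∧ r.1 = 1 ∧ r'.1 = 2))) ∨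
  (r.2.1.2 = r'.2.1.2 ∧ r.2.1.1 ≠ r'.2.1.1 ∧
    ((r.2.1.1 < r'.2.1.1 ∧ r.2.2 = 2 ∧ r'.2.2 = 1) ∨
     (r'.2.1.1 < r.2.1.1 ∧ r'.2.2 = 2 ∧ r.2.2 = 1)))

/-- A clique: a set of pairwise coherent routes. -/
def IsClique (E : Finset (ℕ × ℕ)) (C : Set Route) : Prop :=
  (∀ r ∈ C, IsRoute E r) ∧ ∀ r ∈ C, ∀ r' ∈ C, r ≠ r' → ¬ Conflict r r'

/-- A maximal clique of routes. -/
def IsMaxClique (E : Finset (ℕ × ℕ)) (C : Set Route) : Prop :=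
  IsClique E C ∧ ∀ C' : Set Route, IsClique E C' → C ⊆ C' → C' = C

lemma conflict_iff (a i j c a' i' j' c' : ℕ) :
    Conflict (a, (i, j), c) (a', (i', j'), c') ↔
    ((i = i' ∧ j = j') ∧
      ((a = 1 ∧ c = 2 ∧ a' = 2 ∧ c' = 1) ∨
       (a = 2 ∧ c = 1 ∧ a' = 1 ∧ c' = 2))) ∨
    (i = i' ∧ j ≠ j' ∧
      ((j < j' ∧ a' = 1 ∧ a = 2) ∨ (j' < j ∧ a = 1 ∧ a' = 2))) ∨
    (j = j' ∧ i ≠ i' ∧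
      ((i < i' ∧ c = 2 ∧ c' = 1) ∨ (i' < i ∧ c' = 2 ∧ c = 1))) := by
  simp [Conflict, Prod.ext_iff]

lemma conflict_symm {r r' : Route} (h : Conflict r r') : Conflict r' r := by
  obtain ⟨a, ⟨i, j⟩, c⟩ := r; obtain ⟨a', ⟨i', j'⟩, c'⟩ := r'
  rw [conflict_iff] at h ⊢
  rcases h with ⟨⟨hi, hj⟩, hp⟩ | ⟨hi, hj, hp⟩ | ⟨hj, hi, hp⟩
  · exact Or.inl ⟨⟨hi.symm, hj.symm⟩, by omega⟩
  · exact Or.inr (Or.inl ⟨hi.symm, by omega, by omega⟩)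
  · exact Or.inr (Or.inr ⟨hj.symm, by omega, by omega⟩)

/-- conflict from a same-column (same `j`) violation. -/
lemma conflict_of_col {r r' : Route} (hj : r.2.1.2 = r'.2.1.2)
    (hi : r.2.1.1 < r'.2.1.1) (hc : r.2.2 = 2) (hc' : r'.2.2 = 1) : Conflict r r' :=
  Or.inr (Or.inr ⟨hj, by omega, Or.inl ⟨hi, hc, hc'⟩⟩)

/-- conflict from a same-row (same `i`) violation. -/
lemma conflict_of_row {r r' : Route} (hi : r.2.1.1 = r'.2.1.1)
    (hj : r.2.1.2 < r'.2.1.2) (ha' : r'.1 = 1) (ha : r.1 = 2) : Conflict r r' :=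
  Or.inr (Or.inl ⟨hi, by omega, Or.inl ⟨hj, ha', ha⟩⟩)

lemma mem_Nbr {E : Finset (ℕ × ℕ)} {i j : ℕ} : j ∈ Nbr E i ↔ (i, j) ∈ E := by
  simp only [Nbr, Finset.mem_image, Finset.mem_filter]
  constructor
  · rintro ⟨⟨a, b⟩, ⟨hm, rfl⟩, rfl⟩; exact hm
  · intro h; exact ⟨(i, j), ⟨h, rfl⟩, rfl⟩

lemma insert_mem {E : Finset (ℕ × ℕ)} {C : Set Route} (hC : IsMaxClique E C)
    {r : Route} (hr : IsRoute E r)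
    (hcomp : ∀ r' ∈ C, r ≠ r' → ¬ Conflict r r') : r ∈ C := by
  have hclique : IsClique E (insert r C) := by
    refine ⟨?_, ?_⟩
    · rintro x hx
      rcases Set.mem_insert_iff.mp hx with rfl | hx
      · exact hr
      · exact hC.1.1 x hx
    · intro x hx y hy hxy
      rcases Set.mem_insert_iff.mp hx with rfl | hx
      · rcases Set.mem_insert_iff.mp hy with rfl | hy
        · exact absurd rfl hxy
        · exact hcomp y hy hxy
      · rcases Set.mem_insert_iff.mp hy with hyr | hy
        · intro hcf
          rw [hyr] at hcf hxy
          exact hcomp x hx (Ne.symm hxy) (conflict_symm hcf)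
        · exact hC.1.2 x hx y hy hxy
  have := hC.2 _ hclique (Set.subset_insert r C)
  rw [← this]; exact Set.mem_insert r C

set_option maxHeartbeats 1600000 in
lemma main_S (E : Finset (ℕ × ℕ)) (C : Set Route) (hC : IsMaxClique E C)
    (i : ℕ) (hne : (Nbr E i).Nonempty) :
    ∃! j₀ : ℕ, j₀ ∈ Nbr E i ∧
      (∃ c : ℕ, (1, (i, j₀), c) ∈ C) ∧ (∃ c' : ℕ, (2, (i, j₀), c') ∈ C) := by
  classical
  have hmemNbr : ∀ {a j c : ℕ}, (a, (i, j), c) ∈ C → j ∈ Nbr E i := by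
    intro a j c h
    exact mem_Nbr.mpr (hC.1.1 _ h).2.1
  have hex : ∃ j₀ : ℕ, j₀ ∈ Nbr E i ∧
      (∃ c : ℕ, (1, (i, j₀), c) ∈ C) ∧ (∃ c' : ℕ, (2, (i, j₀), c') ∈ C) := by
    by_contra hA
    set A1 : Finset ℕ := (Nbr E i).filter (fun j => ∃ c : ℕ, (1, (i, j), c) ∈ C) with hA1def
    by_cases h1 : A1.Nonempty
    · -- add an a = 2 route at j₁ = max A1
      set j₁ := A1.max' h1 with hj₁def
      have hj₁A : j₁ ∈ A1 := A1.max'_mem h1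
      have hj₁Nbr : j₁ ∈ Nbr E i := (Finset.mem_filter.mp hj₁A).1
      have hP1 : ∃ c : ℕ, (1, (i, j₁), c) ∈ C := (Finset.mem_filter.mp hj₁A).2
      have hmaxA : ∀ {j c : ℕ}, (1, (i, j), c) ∈ C → j ≤ j₁ := by
        intro j c h
        exact A1.le_max' j (Finset.mem_filter.mpr ⟨hmemNbr h, ⟨c, h⟩⟩)
      have key : ∀ c : ℕ, (c = 1 ∨ c = 2) →
          (c = 1 → ((1 : ℕ), (i, j₁), (2 : ℕ)) ∉ C) →
          (c = 1 → ∀ r' ∈ C, ¬(r'.2.1.2 = j₁ ∧ r'.2.1.1 < i ∧ r'.2.2 = 2)) →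
          (c = 2 → ∀ r' ∈ C, ¬(r'.2.1.2 = j₁ ∧ i < r'.2.1.1 ∧ r'.2.2 = 1)) →
          ((2 : ℕ), (i, j₁), c) ∈ C := by
        intro c hc12 hcE hcB1 hcB2
        apply insert_mem hC ⟨Or.inr rfl, mem_Nbr.mp hj₁Nbr, hc12⟩
        rintro ⟨a', ⟨i', j'⟩, c'⟩ hr' hner hconf
        rw [conflict_iff] at hconf
        rcases hconf with ⟨⟨hii, hjj⟩, hp⟩ | ⟨hii, hjj, hp⟩ | ⟨hjj, hii, hp⟩
        · have ha' : a' = 1 := by omega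
          have hc' : c' = 2 := by omega
          have hcc : c = 1 := by omega
          subst ha'; subst hc'; rw [← hii, ← hjj] at hr'
          exact hcE hcc hr'
        · have ha' : a' = 1 := by omega
          have hlt : j₁ < j' := by omega
          subst ha'; rw [← hii] at hr'
          have := hmaxA hr'
          omega
        · rcases hp with ⟨hlt, hc2, hc'1⟩ | ⟨hlt, hc'2, hc1⟩
          · exact hcB2 hc2 _ hr' ⟨hjj.symm, hlt, hc'1⟩
          · exact hcB1 hc1 _ hr' ⟨hjj.symm, hlt, hc'2⟩
      by_cases hcond : ((1 : ℕ), (i, j₁), (2 : ℕ)) ∈ C ∨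
          ∃ r' ∈ C, r'.2.1.2 = j₁ ∧ r'.2.1.1 < i ∧ r'.2.2 = 2
      · -- take c = 2
        have h2 : ((2 : ℕ), (i, j₁), (2 : ℕ)) ∈ C := by
          apply key 2 (Or.inr rfl) (by omega) (by omega)
          rintro - r'' hr'' ⟨hj'', hi'', hc''⟩
          rcases hcond with h12 | ⟨r', hr', hj', hi', hc'⟩
          · have hne'' : ((1 : ℕ), (i, j₁), (2 : ℕ)) ≠ r'' := by
              intro h; rw [← h] at hc''; simp at hc''
            exact hC.1.2 _ h12 _ hr'' hne''
              (conflict_of_col hj''.symm hi'' rfl hc'')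
          · have hne' : r' ≠ r'' := by
              intro h; rw [h] at hi'; omega
            exact hC.1.2 _ hr' _ hr'' hne'
              (conflict_of_col (by rw [hj', hj'']) (by omega) hc' hc'')
        exact hA ⟨j₁, hj₁Nbr, hP1, ⟨2, h2⟩⟩
      · push_neg at hcond
        have h2 : ((2 : ℕ), (i, j₁), (1 : ℕ)) ∈ C := by
          apply key 1 (Or.inl rfl) (fun _ => hcond.1) ?_ (by omega)
          rintro - r' hr' ⟨hj', hi', hc'⟩
          exact hcond.2 r' hr' hj' hi' hc'
        exact hA ⟨j₁, hj₁Nbr, hP1, ⟨1, h2⟩⟩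
    · -- A1 empty: add an a = 1 route
      have hA1empty : ∀ {j c : ℕ}, (1, (i, j), c) ∉ C := by
        intro j c h
        exact h1 ⟨j, Finset.mem_filter.mpr ⟨hmemNbr h, ⟨c, h⟩⟩⟩
      set A2 : Finset ℕ := (Nbr E i).filter (fun j => ∃ c : ℕ, (2, (i, j), c) ∈ C) with hA2def
      obtain ⟨j₂, hj₂Nbr, hj₂min⟩ : ∃ j₂ ∈ Nbr E i, ∀ j ∈ A2, j₂ ≤ j := by
        by_cases h2 : A2.Nonempty
        · exact ⟨A2.min' h2, (Finset.mem_filter.mp (A2.min'_mem h2)).1,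
            fun j hj => A2.min'_le j hj⟩
        · obtain ⟨j, hj⟩ := hne
          exact ⟨j, hj, fun j' hj' => absurd ⟨j', hj'⟩ h2⟩
      have hminA : ∀ {j c : ℕ}, (2, (i, j), c) ∈ C → j₂ ≤ j := by
        intro j c h
        exact hj₂min j (Finset.mem_filter.mpr ⟨hmemNbr h, ⟨c, h⟩⟩)
      have key : ∀ c : ℕ, (c = 1 ∨ c = 2) →
          (c = 2 → ((2 : ℕ), (i, j₂), (1 : ℕ)) ∉ C) →
          (c = 1 → ∀ r' ∈ C, ¬(r'.2.1.2 = j₂ ∧ r'.2.1.1 < i ∧ r'.2.2 = 2)) →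
          (c = 2 → ∀ r' ∈ C, ¬(r'.2.1.2 = j₂ ∧ i < r'.2.1.1 ∧ r'.2.2 = 1)) →
          ((1 : ℕ), (i, j₂), c) ∈ C := by
        intro c hc12 hcE hcB1 hcB2
        apply insert_mem hC ⟨Or.inl rfl, mem_Nbr.mp hj₂Nbr, hc12⟩
        rintro ⟨a', ⟨i', j'⟩, c'⟩ hr' hner hconf
        rw [conflict_iff] at hconf
        rcases hconf with ⟨⟨hii, hjj⟩, hp⟩ | ⟨hii, hjj, hp⟩ | ⟨hjj, hii, hp⟩
        · have ha' : a' = 2 := by omega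
          have hc' : c' = 1 := by omega
          have hcc : c = 2 := by omega
          subst ha'; subst hc'; rw [← hii, ← hjj] at hr'
          exact hcE hcc hr'
        · have ha' : a' = 2 := by omega
          have hlt : j' < j₂ := by omega
          subst ha'; rw [← hii] at hr'
          have := hminA hr'
          omega
        · rcases hp with ⟨hlt, hc2, hc'1⟩ | ⟨hlt, hc'2, hc1⟩
          · exact hcB2 hc2 _ hr' ⟨hjj.symm, hlt, hc'1⟩
          · exact hcB1 hc1 _ hr' ⟨hjj.symm, hlt, hc'2⟩
      by_cases hcond : ((2 : ℕ), (i, j₂), (1 : ℕ)) ∈ C ∨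
          ∃ r' ∈ C, r'.2.1.2 = j₂ ∧ i < r'.2.1.1 ∧ r'.2.2 = 1
      · -- take c = 1
        have h2 : ((1 : ℕ), (i, j₂), (1 : ℕ)) ∈ C := by
          apply key 1 (Or.inl rfl) (by omega) ?_ (by omega)
          rintro - r' hr' ⟨hj', hi', hc'⟩
          rcases hcond with h21 | ⟨r'', hr'', hj'', hi'', hc''⟩
          · have hne' : r' ≠ ((2 : ℕ), (i, j₂), (1 : ℕ)) := by
              intro h; rw [h] at hc'; simp at hc'
            exact hC.1.2 _ hr' _ h21 hne'
              (conflict_of_col (by rw [hj']) hi' hc' rfl)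
          · have hne' : r' ≠ r'' := by
              intro h; rw [h] at hi'; omega
            exact hC.1.2 _ hr' _ hr'' hne'
              (conflict_of_col (by rw [hj', hj'']) (by omega) hc' hc'')
        exact hA1empty h2
      · push_neg at hcond
        have h2 : ((1 : ℕ), (i, j₂), (2 : ℕ)) ∈ C := by
          apply key 2 (Or.inr rfl) (fun _ => hcond.1) (by omega) ?_
          rintro - r' hr' ⟨hj', hi', hc'⟩
          exact hcond.2 r' hr' hj' hi' hc'
        exact hA1empty h2
  obtain ⟨j₀, hj₀⟩ := hex
  refine ⟨j₀, hj₀, ?_⟩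
  intro j' hj'
  by_contra hne'
  obtain ⟨hj₀Nbr, ⟨c1, hc1⟩, ⟨c2, hc2⟩⟩ := hj₀
  obtain ⟨hj'Nbr, ⟨c1', hc1'⟩, ⟨c2', hc2'⟩⟩ := hj'
  rcases Nat.lt_or_ge j' j₀ with hlt | hge
  · refine hC.1.2 _ hc2' _ hc1 (by simp) (conflict_of_row rfl hlt rfl rfl)
  · have hlt : j₀ < j' := by omega
    refine hC.1.2 _ hc2 _ hc1' (by simp) (conflict_of_row rfl hlt rfl rfl)

/-- Swap a route across the bipartite symmetry. -/
def swr (r : Route) : Route := (r.2.2, (r.2.1.2, r.2.1.1), r.1)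

lemma swr_invol (r : Route) : swr (swr r) = r := by
  obtain ⟨a, ⟨i, j⟩, c⟩ := r; rfl

lemma swr_image_swr (D : Set Route) : swr '' (swr '' D) = D := by
  ext x
  constructor
  · rintro ⟨y, ⟨z, hz, rfl⟩, rfl⟩
    rw [swr_invol]; exact hz
  · intro hx
    exact ⟨swr x, ⟨x, hx, rfl⟩, swr_invol x⟩

lemma conflict_swr {r r' : Route} (h : Conflict r r') : Conflict (swr r) (swr r') := by
  obtain ⟨a, ⟨i, j⟩, c⟩ := r; obtain ⟨a', ⟨i', j'⟩, c'⟩ := r'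
  rw [conflict_iff] at h
  rw [show swr (a, (i, j), c) = (c, (j, i), a) from rfl,
    show swr (a', (i', j'), c') = (c', (j', i'), a') from rfl, conflict_iff]
  rcases h with ⟨⟨hi, hj⟩, hp⟩ | ⟨hi, hj, hp⟩ | ⟨hj, hi, hp⟩
  · exact Or.inl ⟨⟨hj, hi⟩, by omega⟩
  · exact Or.inr (Or.inr ⟨hi, hj, by omega⟩)
  · exact Or.inr (Or.inl ⟨hj, hi, by omega⟩)

lemma swr_ne {r r' : Route} (h : r ≠ r') : swr r ≠ swr r' := by
  intro he
  apply h
  rw [← swr_invol r, ← swr_invol r', he]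

lemma isRoute_swr {E : Finset (ℕ × ℕ)} {r : Route} (h : IsRoute E r) :
    IsRoute (E.image Prod.swap) (swr r) := by
  obtain ⟨a, ⟨i, j⟩, c⟩ := r
  obtain ⟨ha, hm, hc⟩ := h
  exact ⟨hc, Finset.mem_image.mpr ⟨(i, j), hm, rfl⟩, ha⟩

lemma mem_swap_image {E : Finset (ℕ × ℕ)} {p : ℕ × ℕ} :
    p ∈ E.image Prod.swap ↔ p.swap ∈ E := by
  constructor
  · intro h
    obtain ⟨q, hq, rfl⟩ := Finset.mem_image.mp h
    simpa using hq
  · intro h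
    exact Finset.mem_image.mpr ⟨p.swap, h, Prod.swap_swap p⟩

lemma isRoute_swr' {E : Finset (ℕ × ℕ)} {r : Route}
    (h : IsRoute (E.image Prod.swap) r) : IsRoute E (swr r) := by
  obtain ⟨a, ⟨i, j⟩, c⟩ := r
  obtain ⟨ha, hm, hc⟩ := h
  exact ⟨hc, by simpa [swr] using mem_swap_image.mp hm, ha⟩

lemma maxclique_swr {E : Finset (ℕ × ℕ)} {C : Set Route} (hC : IsMaxClique E C) :
    IsMaxClique (E.image Prod.swap) (swr '' C) := by
  constructor
  · constructor
    · rintro x ⟨r, hr, rfl⟩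
      exact isRoute_swr (hC.1.1 r hr)
    · rintro x ⟨r, hr, rfl⟩ y ⟨r', hr', rfl⟩ hne hcf
      have : r ≠ r' := by rintro rfl; exact hne rfl
      exact hC.1.2 r hr r' hr' this
        (by rw [← swr_invol r, ← swr_invol r']; exact conflict_swr hcf)
  · intro D hD hsub
    have hclD : IsClique E (swr '' D) := by
      constructor
      · rintro x ⟨r, hr, rfl⟩
        exact isRoute_swr' (hD.1 r hr)
      · rintro x ⟨r, hr, rfl⟩ y ⟨r', hr', rfl⟩ hne hcf
        have : r ≠ r' := by rintro rfl; exact hne rfl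
        exact hD.2 r hr r' hr' this
          (by rw [← swr_invol r, ← swr_invol r']; exact conflict_swr hcf)
    have hsub' : C ⊆ swr '' D := by
      intro x hx
      have : swr x ∈ D := hsub ⟨x, hx, rfl⟩
      exact ⟨swr x, this, swr_invol x⟩
    have := hC.2 _ hclD hsub'
    rw [← swr_image_swr D, this]

lemma nbr_swap (E : Finset (ℕ × ℕ)) (j : ℕ) : Nbr (E.image Prod.swap) j = Nbr' E j := by
  ext i
  rw [mem_Nbr, mem_swap_image]
  simp only [Nbr', Prod.swap_prod_mk, Finset.mem_image, Finset.mem_filter]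
  constructor
  · intro h; exact ⟨(i, j), ⟨h, rfl⟩, rfl⟩
  · rintro ⟨⟨a, b⟩, ⟨hm, rfl⟩, rfl⟩; exact hm

/-- For each vertex of `H`, a maximal clique uses both parallel source
(resp. sink) edges on exactly one incident edge of `H`. -/
theorem maxclique_unique_double_edge (n m : ℕ) (hn : 1 ≤ n) (hm : 1 ≤ m) (E : Finset (ℕ × ℕ))
    (hE : ∀ p ∈ E, 1 ≤ p.1 ∧ p.1 ≤ n ∧ 1 ≤ p.2 ∧ p.2 ≤ m)
    (hdegS : ∀ i ∈ Finset.Icc 1 n, 2 ≤ (Nbr E i).card)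
    (hdegT : ∀ j ∈ Finset.Icc 1 m, 2 ≤ (Nbr' E j).card) :
    ∀ C : Set Route, IsMaxClique E C →
      (∀ i ∈ Finset.Icc 1 n,
        ∃! j₀ : ℕ, j₀ ∈ Nbr E i ∧
          (∃ c : ℕ, (1, (i, j₀), c) ∈ C) ∧ (∃ c' : ℕ, (2, (i, j₀), c') ∈ C)) ∧
      (∀ j ∈ Finset.Icc 1 m,
        ∃! i₀ : ℕ, i₀ ∈ Nbr' E j ∧
          (∃ a : ℕ, (a, (i₀, j), 1) ∈ C) ∧ (∃ a' : ℕ, (a', (i₀, j), 2) ∈ C)) := by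
  intro C hC
  constructor
  · intro i hi
    have hne : (Nbr E i).Nonempty := Finset.card_pos.mp (by have := hdegS i hi; omega)
    exact main_S E C hC i hne
  · intro j hj
    have hne : (Nbr (E.image Prod.swap) j).Nonempty := by
      rw [nbr_swap]
      exact Finset.card_pos.mp (by have := hdegT j hj; omega)
    obtain ⟨i₀, ⟨hmem, ⟨c, hc⟩, ⟨c', hc'⟩⟩, huniq⟩ :=
      main_S (E.image Prod.swap) (swr '' C) (maxclique_swr hC) j hne
    have hmem' : i₀ ∈ Nbr' E j := by rwa [nbr_swap] at hmem
    have hget : ∀ {x : ℕ} {y : Route}, y ∈ swr '' C → y = (x, (j, i₀), x) → True := fun _ _ => trivial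
    have conv1 : ∀ {b x : ℕ}, ((b : ℕ), (j, i₀), x) ∈ swr '' C → ((x : ℕ), (i₀, j), b) ∈ C := by
      rintro b x ⟨r, hr, hre⟩
      have : r = swr ((b, (j, i₀), x) : Route) := by rw [← hre, swr_invol]
      rw [this] at hr
      exact hr
    refine ⟨i₀, ⟨hmem', ⟨c, conv1 hc⟩, ⟨c', conv1 hc'⟩⟩, ?_⟩
    rintro y ⟨hymem, ⟨a, ha⟩, ⟨a', ha'⟩⟩
    refine huniq y ⟨by rwa [nbr_swap], ⟨a, ⟨(a, (y, j), 1), ha, rfl⟩⟩,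
      ⟨a', ⟨(a', (y, j), 2), ha', rfl⟩⟩⟩
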